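/- Let p ≥ 2 be an integer, H ∈ (0, 1 − 1/(2p)) and r ∈ {0,1,…,p−1}. Then there exists a constant C > 0 such that for every N ≥ 1, (1/N) · Σ_{k,l=1}^{N} |ρ_H(k−l)|^r · |ρ_H(k−1)|^{p−r} · |ρ_H(l−1)|^{p−r} ≤ C · (N^{−1} + N^{2H−2}). -/

import Mathlib

open Filter Topology

/-- The autocovariance function of fractional Gaussian noise with Hurst index `H`:
`ρ_H(v) = ½(|v+1|^{2H} + |v−1|^{2H} − 2|v|^{2H})`. -/
noncomputable def rhoFGN (H : ℝ) (v : ℤ) : ℝ :=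
  (|(v : ℝ) + 1| ^ (2 * H) + |(v : ℝ) - 1| ^ (2 * H) - 2 * |(v : ℝ)| ^ (2 * H)) / 2

open Real Finset

section Aux

lemma rho_even (H : ℝ) (v : ℤ) : rhoFGN H (-v) = rhoFGN H v := by
  unfold rhoFGN
  have h1 : |((-v : ℤ) : ℝ) + 1| = |(v : ℝ) - 1| := by push_cast; rw [← abs_neg]; ring_nf
  have h2 : |((-v : ℤ) : ℝ) - 1| = |(v : ℝ) + 1| := by push_cast; rw [← abs_neg]; ring_nf
  have h3 : |((-v : ℤ) : ℝ)| = |(v : ℝ)| := by push_cast; rw [abs_neg]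
  rw [h1, h2, h3]; ring

lemma rho_zero (H : ℝ) (hH : 0 < H) : rhoFGN H 0 = 1 := by
  unfold rhoFGN
  simp [Real.zero_rpow (ne_of_gt (by positivity : (0:ℝ) < 2*H))]

lemma rho_half (v : ℤ) (hv : v ≠ 0) : rhoFGN (1/2) v = 0 := by
  unfold rhoFGN
  norm_num
  rcases lt_or_gt_of_ne hv with h | h
  · have hv' : v ≤ -1 := by omega
    have hv1 : ((v:ℝ)) ≤ -1 := by exact_mod_cast hv'
    rw [abs_of_nonpos (by linarith), abs_of_nonpos (by linarith), abs_of_nonpos (by linarith)]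
    ring
  · have hv' : (1:ℤ) ≤ v := by omega
    have hv1 : (1:ℝ) ≤ (v:ℝ) := by exact_mod_cast hv'
    rw [abs_of_nonneg (by linarith), abs_of_nonneg (by linarith), abs_of_nonneg (by linarith)]
    ring

lemma sum_rpow_le {θ : ℝ} (h0 : 0 ≤ θ) (h1 : θ < 1) (N : ℕ) :
    ∑ j ∈ Icc 1 N, (j : ℝ) ^ (-θ) ≤ (N : ℝ) ^ (1 - θ) / (1 - θ) := by
  induction N with
  | zero => simp [Real.zero_rpow (by linarith : (1:ℝ) - θ ≠ 0)]
  | succ n ih =>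
    rw [Finset.sum_Icc_succ_top (by omega)]
    have hn1 : (0:ℝ) < (n:ℝ) + 1 := by positivity
    have key : (1 - θ) * ((n+1 : ℝ)) ^ (-θ) ≤ ((n+1 : ℝ)) ^ (1-θ) - (n : ℝ) ^ (1-θ) := by
      have hd1 : (1:ℝ)/((n:ℝ)+1) ≤ 1 := by rw [div_le_one hn1]; linarith
      have hb : ((n:ℝ)/(n+1)) ^ (1-θ) ≤ 1 + (1-θ) * (-1/(n+1)) := by
        have := rpow_one_add_le_one_add_mul_self (s := -1/((n:ℝ)+1))
          (by rw [neg_div]; linarith) (by linarith : (0:ℝ) ≤ 1 - θ) (by linarith)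
        have e : 1 + (-1/((n:ℝ)+1)) = (n:ℝ)/((n:ℝ)+1) := by field_simp; ring
        rwa [e] at this
      have hbn : ((n:ℝ)/(n+1)) ^ (1-θ) = (n:ℝ)^(1-θ) / ((n:ℝ)+1)^(1-θ) := by
        rw [Real.div_rpow (by positivity) (by positivity)]
      rw [hbn, div_le_iff₀ (by positivity)] at hb
      have e2 : (1 + (1 - θ) * (-1 / ((n:ℝ) + 1))) * ((n:ℝ) + 1) ^ (1 - θ)
          = ((n:ℝ)+1)^(1-θ) - (1-θ) * (((n:ℝ)+1)^(1-θ) / ((n:ℝ)+1)) := by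
        field_simp; ring
      rw [e2] at hb
      have e3 : ((n:ℝ)+1)^(1-θ) / ((n:ℝ)+1) = ((n:ℝ)+1)^(-θ) := by
        rw [Real.rpow_sub hn1, Real.rpow_one, Real.rpow_neg hn1.le]
        field_simp
      rw [e3] at hb
      linarith
    push_cast
    have h1θ : (0:ℝ) < 1 - θ := by linarith
    calc ∑ j ∈ Icc 1 n, (j : ℝ) ^ (-θ) + ((n:ℝ)+1) ^ (-θ)
        ≤ (n : ℝ) ^ (1 - θ) / (1 - θ) + ((n:ℝ)+1) ^ (-θ) := by linarith
      _ ≤ ((n:ℝ)+1) ^ (1 - θ) / (1 - θ) := by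
          rw [div_add' _ _ _ (ne_of_gt h1θ), div_le_div_iff_of_pos_right h1θ]
          linarith

lemma sum_rpow_bounded {γ : ℝ} (h : 1 < γ) :
    ∃ K : ℝ, 0 < K ∧ ∀ N : ℕ, ∑ j ∈ Icc 1 N, (j : ℝ) ^ (-γ) ≤ K := by
  have hs : Summable (fun n : ℕ => (n : ℝ) ^ (-γ)) := by
    rw [Real.summable_nat_rpow]; linarith
  have hnn : 0 ≤ ∑' n : ℕ, (n : ℝ) ^ (-γ) :=
    tsum_nonneg (fun n => Real.rpow_nonneg (Nat.cast_nonneg n) _)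
  refine ⟨∑' n : ℕ, (n : ℝ) ^ (-γ) + 1, by linarith, fun N => ?_⟩
  have := Summable.sum_le_tsum (Finset.Icc 1 N) (fun i _ => Real.rpow_nonneg (Nat.cast_nonneg i) _) hs
  linarith

lemma sum_rpow_mono {γ γ' : ℝ} (h : γ' ≤ γ) (N : ℕ) :
    ∑ j ∈ Icc 1 N, (j : ℝ) ^ (-γ) ≤ ∑ j ∈ Icc 1 N, (j : ℝ) ^ (-γ') := by
  refine Finset.sum_le_sum (fun j hj => ?_)
  simp only [Finset.mem_Icc] at hj
  exact Real.rpow_le_rpow_of_exponent_le (by exact_mod_cast hj.1) (by linarith)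

lemma sum_rpow_nonneg (γ : ℝ) (N : ℕ) : 0 ≤ ∑ j ∈ Icc 1 N, (j : ℝ) ^ (-γ) :=
  Finset.sum_nonneg (fun j _ => Real.rpow_nonneg (Nat.cast_nonneg j) _)

lemma half_rpow {H x : ℝ} (h0 : 0 < H) (hx : 0 < x) :
    (x/2 : ℝ) ^ (2*H-2) ≤ 4 * x ^ (2*H-2) := by
  rw [Real.div_rpow (by linarith) (by norm_num)]
  rw [div_le_iff₀ (by positivity : (0:ℝ) < (2:ℝ) ^ (2*H-2))]
  have h4 : (4:ℝ) * (2:ℝ) ^ (2*H-2) = (2:ℝ) ^ (2*H) := by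
    rw [show (2*H) = (2*H-2) + 2 by ring, Real.rpow_add (by norm_num)]
    rw [show ((2:ℝ):ℝ) ^ (2:ℝ) = 4 by
      rw [show (2:ℝ) = ((2:ℕ):ℝ) from by norm_num, Real.rpow_natCast]; norm_num]
    ring
  rw [mul_comm (4:ℝ), mul_assoc, h4]
  have : (1:ℝ) ≤ (2:ℝ) ^ (2*H) := Real.one_le_rpow (by norm_num) (by positivity)
  nlinarith [Real.rpow_nonneg (le_of_lt hx) (2*H-2)]

lemma rho_decay {H : ℝ} (h0 : 0 < H) (h1 : H < 1) :
    ∃ c : ℝ, 1 ≤ c ∧ ∀ v : ℤ, 2 ≤ v → |rhoFGN H v| ≤ c * (v : ℝ) ^ (2*H - 2) := by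
  have hcnn : (0:ℝ) ≤ 4 * H * |2*H - 1| := by positivity
  refine ⟨4 * H * |2*H - 1| + 1, by linarith, fun v hv => ?_⟩
  set x : ℝ := (v : ℝ) with hx
  have hx2 : (2:ℝ) ≤ x := by rw [hx]; exact_mod_cast hv
  have hrho : rhoFGN H v = ((x+1) ^ (2*H) - x ^ (2*H) - (x ^ (2*H) - (x-1) ^ (2*H))) / 2 := by
    unfold rhoFGN
    rw [← hx, abs_of_nonneg (by linarith), abs_of_nonneg (by linarith), abs_of_nonneg (by linarith)]
    ring
  set f : ℝ → ℝ := fun t => (t+1) ^ (2*H) - t ^ (2*H) with hf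
  have hderiv : ∀ t : ℝ, 0 < t →
      HasDerivAt f (2*H * (t+1) ^ (2*H-1) - 2*H * t ^ (2*H-1)) t := by
    intro t ht
    have d1 : HasDerivAt (fun t : ℝ => (t+1) ^ (2*H)) (2*H * (t+1) ^ (2*H-1)) t := by
      have := (Real.hasDerivAt_rpow_const (x := t+1) (p := 2*H) (Or.inl (by positivity))).comp t
        ((hasDerivAt_id t).add_const 1)
      simpa [Function.comp_def] using this
    have d2 : HasDerivAt (fun t : ℝ => t ^ (2*H)) (2*H * t ^ (2*H-1)) t :=
      Real.hasDerivAt_rpow_const (Or.inl (ne_of_gt ht))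
    exact d1.sub d2
  obtain ⟨ξ, hξ, hξ2⟩ := exists_hasDerivAt_eq_slope f
    (fun t => 2*H * (t+1) ^ (2*H-1) - 2*H * t ^ (2*H-1)) (by linarith : x - 1 < x)
    (fun t ht => ((hderiv t (by rcases ht with ⟨a,b⟩; simp at a; linarith)).continuousAt).continuousWithinAt)
    (fun t ht => hderiv t (by rcases ht with ⟨a,b⟩; linarith))
  have hξpos : 0 < ξ := by rcases hξ with ⟨a,b⟩; linarith
  set g : ℝ → ℝ := fun t => t ^ (2*H-1) with hg
  have hgderiv : ∀ t : ℝ, 0 < t → HasDerivAt g ((2*H-1) * t ^ (2*H-2)) t := by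
    intro t ht
    have := Real.hasDerivAt_rpow_const (x := t) (p := 2*H-1) (Or.inl (ne_of_gt ht))
    simpa [show 2*H-1-1 = 2*H-2 by ring] using this
  obtain ⟨η, hη, hη2⟩ := exists_hasDerivAt_eq_slope g (fun t => (2*H-1) * t ^ (2*H-2))
    (by linarith : ξ < ξ + 1)
    (fun t ht => ((hgderiv t (by rcases ht with ⟨a,b⟩; linarith)).continuousAt).continuousWithinAt)
    (fun t ht => hgderiv t (by rcases ht with ⟨a,b⟩; linarith))
  have hηpos : 0 < η := by rcases hη with ⟨a,b⟩; linarith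
  have hfslope : f x - f (x-1) = 2*H * (ξ+1) ^ (2*H-1) - 2*H * ξ ^ (2*H-1) := by
    rw [hξ2]; field_simp; ring
  have hgslope : g (ξ+1) - g ξ = (2*H-1) * η ^ (2*H-2) := by
    rw [hη2]; field_simp; ring
  have e1 : rhoFGN H v = H * ((2*H-1) * η ^ (2*H-2)) := by
    rw [hrho]
    have hfe : f x - f (x-1) = (x+1) ^ (2*H) - x ^ (2*H) - (x ^ (2*H) - (x-1) ^ (2*H)) := by
      simp only [hf]
      rw [show x - 1 + 1 = x by ring]
    rw [← hfe, hfslope]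
    have hge : (2*H) * (g (ξ+1) - g ξ) = 2*H * (ξ+1) ^ (2*H-1) - 2*H * ξ ^ (2*H-1) := by
      simp only [hg]; ring
    rw [← hge, hgslope]
    ring
  have hηx : x/2 ≤ η := by
    rcases hη with ⟨a, _⟩; rcases hξ with ⟨a', _⟩; linarith
  have hxpos : (0:ℝ) < x := by linarith
  have hmono : η ^ (2*H-2) ≤ (x/2) ^ (2*H-2) :=
    Real.rpow_le_rpow_of_nonpos (by positivity) hηx (by linarith)
  have hsplit : (x/2 : ℝ) ^ (2*H-2) ≤ 4 * x ^ (2*H-2) := half_rpow h0 hxpos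
  have habs : |rhoFGN H v| = H * |2*H-1| * η ^ (2*H-2) := by
    rw [e1, abs_mul, abs_mul, abs_of_nonneg (le_of_lt h0),
      abs_of_nonneg (Real.rpow_nonneg (le_of_lt hηpos) _)]
    ring
  rw [habs]
  have hxnn : (0:ℝ) ≤ x ^ (2*H-2) := Real.rpow_nonneg (le_of_lt hxpos) _
  calc H * |2*H-1| * η ^ (2*H-2) ≤ H * |2*H-1| * (4 * x ^ (2*H-2)) := by
        have := le_trans hmono hsplit
        have hH' : 0 ≤ H * |2*H-1| := by positivity
        nlinarith
    _ ≤ (4 * H * |2*H - 1| + 1) * x ^ (2*H-2) := by nlinarith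

lemma rho_bound {H : ℝ} (h0 : 0 < H) (h1 : H < 1) :
    ∃ c : ℝ, 1 ≤ c ∧ ∀ v : ℤ, |rhoFGN H v| ≤ c * (max 1 |(v : ℝ)|) ^ (2*H - 2) := by
  obtain ⟨c₀, hc₀, hdec⟩ := rho_decay h0 h1
  refine ⟨c₀ + 3, by linarith, fun v => ?_⟩
  rcases le_or_gt 2 |v| with h2 | h2
  · -- |v| ≥ 2
    have key : ∀ w : ℤ, 2 ≤ w → |rhoFGN H w| ≤ (c₀+3) * (max 1 |(w : ℝ)|) ^ (2*H-2) := by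
      intro w hw
      have hw2 : (2:ℝ) ≤ (w:ℝ) := by exact_mod_cast hw
      have hmx : max 1 |(w:ℝ)| = (w:ℝ) := by
        rw [abs_of_nonneg (by linarith)]; exact max_eq_right (by linarith)
      rw [hmx]
      have := hdec w hw
      have hnn : (0:ℝ) ≤ (w:ℝ) ^ (2*H-2) := Real.rpow_nonneg (by linarith) _
      nlinarith
    rcases le_or_gt 0 v with hv | hv
    · rw [abs_of_nonneg hv] at h2; exact key v h2
    · have h2' : 2 ≤ -v := by rw [abs_of_neg hv] at h2; exact h2
      have heq : rhoFGN H v = rhoFGN H (-v) := by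
        have := rho_even H (-v); rwa [neg_neg] at this
      have hax : |(v:ℝ)| = |((-v : ℤ):ℝ)| := by push_cast; rw [abs_neg]
      rw [heq, hax]; exact key (-v) h2'
  · -- |v| ≤ 1
    have hb' := abs_lt.mp h2
    have hb : -1 ≤ v ∧ v ≤ 1 := ⟨by omega, by omega⟩
    have hsmall : ∀ w : ℤ, -1 ≤ w → w ≤ 1 → |rhoFGN H w| ≤ 3 := by
      intro w hw1 hw2
      have hone : |rhoFGN H 1| ≤ 3 := by
        have hval : rhoFGN H 1 = ((2:ℝ) ^ (2*H) - 2) / 2 := by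
          unfold rhoFGN
          norm_num [Real.zero_rpow (ne_of_gt (by positivity : (0:ℝ) < 2*H))]
        rw [hval]
        have hlb : (1:ℝ) ≤ (2:ℝ) ^ (2*H) := Real.one_le_rpow (by norm_num) (by positivity)
        have hub : (2:ℝ) ^ (2*H) ≤ 4 := by
          have : (2:ℝ) ^ (2*H) ≤ (2:ℝ) ^ (2:ℝ) :=
            Real.rpow_le_rpow_of_exponent_le (by norm_num) (by linarith)
          rw [show ((2:ℝ):ℝ) ^ (2:ℝ) = 4 by
            rw [show (2:ℝ) = ((2:ℕ):ℝ) from by norm_num, Real.rpow_natCast]; norm_num] at this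
          exact this
        rw [abs_div, abs_of_nonneg (by norm_num : (0:ℝ) ≤ 2)]
        rw [div_le_iff₀ (by norm_num : (0:ℝ) < 2)]
        rw [abs_le]; constructor <;> linarith
      interval_cases w
      · rw [show ((-1 : ℤ)) = -(1:ℤ) from rfl, rho_even]; exact hone
      · rw [rho_zero H h0]; norm_num
      · exact hone
    have hmx : max 1 |(v:ℝ)| = 1 := by
      have : |(v:ℝ)| ≤ 1 := by
        have : |v| ≤ 1 := by omega
        calc |(v:ℝ)| = (|v| : ℝ) := by push_cast [Int.cast_abs]; ring
          _ ≤ 1 := by exact_mod_cast this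
      exact max_eq_left this
    rw [hmx, Real.one_rpow, mul_one]
    calc |rhoFGN H v| ≤ 3 := hsmall v hb.1 hb.2
      _ ≤ c₀ + 3 := by linarith

lemma rho_bound_nat {H c : ℝ} (h0 : 0 < H) (h1 : H < 1) (hc : 1 ≤ c)
    (hbd : ∀ v : ℤ, |rhoFGN H v| ≤ c * (max 1 |(v : ℝ)|) ^ (2*H - 2)) (k : ℕ) (hk : 1 ≤ k) :
    |rhoFGN H ((k:ℤ) - 1)| ≤ 4 * c * (k : ℝ) ^ (2*H-2) := by
  have hkR : (1:ℝ) ≤ (k:ℝ) := by exact_mod_cast hk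
  have hM : (k:ℝ)/2 ≤ max 1 |(((k:ℤ) - 1 : ℤ) : ℝ)| := by
    rcases eq_or_lt_of_le hk with h1 | h1
    · rw [← h1]; norm_num
    · have hk2 : (2:ℝ) ≤ (k:ℝ) := by exact_mod_cast h1
      have : |(((k:ℤ) - 1 : ℤ) : ℝ)| = (k:ℝ) - 1 := by
        push_cast; rw [abs_of_nonneg (by linarith)]
      rw [this]
      calc (k:ℝ)/2 ≤ (k:ℝ) - 1 := by linarith
        _ ≤ max 1 ((k:ℝ) - 1) := le_max_right _ _
  have h1 := hbd ((k:ℤ) - 1)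
  have h2 : (max 1 |(((k:ℤ) - 1 : ℤ) : ℝ)|) ^ (2*H-2) ≤ ((k:ℝ)/2) ^ (2*H-2) :=
    Real.rpow_le_rpow_of_nonpos (by linarith) hM (by linarith)
  have h3 : ((k:ℝ)/2) ^ (2*H-2) ≤ 4 * (k:ℝ) ^ (2*H-2) := half_rpow h0 (by linarith)
  calc |rhoFGN H ((k:ℤ) - 1)| ≤ c * (max 1 |(((k:ℤ) - 1 : ℤ) : ℝ)|) ^ (2*H-2) := h1
    _ ≤ c * (4 * (k:ℝ) ^ (2*H-2)) :=
        mul_le_mul_of_nonneg_left (le_trans h2 h3) (by linarith)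
    _ = 4 * c * (k:ℝ) ^ (2*H-2) := by ring

lemma window_sum (G : ℤ → ℝ) (hnn : ∀ v, 0 ≤ G v) (heven : ∀ v, G (-v) = G v)
    (N k : ℕ) (hk : k ∈ Icc 1 N) :
    ∑ l ∈ Icc 1 N, G ((k:ℤ) - (l:ℤ)) ≤ G 0 + 2 * ∑ j ∈ Icc 1 N, G (j:ℤ) := by
  simp only [Finset.mem_Icc] at hk
  rw [← Finset.sum_filter_add_sum_filter_not (Icc 1 N) (fun l => l ≤ k)]
  have part1 : ∑ l ∈ (Icc 1 N).filter (fun l => l ≤ k), G ((k:ℤ) - (l:ℤ))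
      ≤ G 0 + ∑ j ∈ Icc 1 N, G (j:ℤ) := by
    have he : ∀ l ∈ (Icc 1 N).filter (fun l => l ≤ k), G ((k:ℤ) - (l:ℤ)) = G (((k - l : ℕ) : ℤ)) := by
      intro l hl
      simp only [Finset.mem_filter, Finset.mem_Icc] at hl
      congr 1
      push_cast [Nat.cast_sub hl.2]
      ring
    rw [Finset.sum_congr rfl he]
    have himg := Finset.sum_image (s := (Icc 1 N).filter (fun l => l ≤ k))
      (g := fun l => k - l) (f := fun j : ℕ => G (j:ℤ))
      (fun x hx y hy hxy => by
        simp only [Finset.coe_filter, Finset.mem_coe, Set.mem_setOf_eq, Finset.mem_filter, Finset.mem_Icc] at hx hy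
        have h' : k - x = k - y := hxy; omega)
    rw [← himg]
    have hsub : ((Icc 1 N).filter (fun l => l ≤ k)).image (fun l => k - l) ⊆ Icc 0 N := by
      intro j hj
      simp only [Finset.mem_image, Finset.mem_filter, Finset.mem_Icc] at hj ⊢
      omega
    calc ∑ j ∈ ((Icc 1 N).filter (fun l => l ≤ k)).image (fun l => k - l), G (j:ℤ)
        ≤ ∑ j ∈ Icc 0 N, G (j:ℤ) :=
          Finset.sum_le_sum_of_subset_of_nonneg hsub (fun j _ _ => hnn _)
      _ = G 0 + ∑ j ∈ Icc 1 N, G (j:ℤ) := by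
          rw [show Icc 0 N = insert 0 (Icc 1 N) from by ext j; simp; omega,
            Finset.sum_insert (by simp)]
          norm_num
  have part2 : ∑ l ∈ (Icc 1 N).filter (fun l => ¬ l ≤ k), G ((k:ℤ) - (l:ℤ))
      ≤ ∑ j ∈ Icc 1 N, G (j:ℤ) := by
    have he : ∀ l ∈ (Icc 1 N).filter (fun l => ¬ l ≤ k), G ((k:ℤ) - (l:ℤ)) = G (((l - k : ℕ) : ℤ)) := by
      intro l hl
      simp only [Finset.mem_filter, Finset.mem_Icc, not_le] at hl
      rw [← heven]
      congr 1
      push_cast [Nat.cast_sub (le_of_lt hl.2)]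
      ring
    rw [Finset.sum_congr rfl he]
    have himg := Finset.sum_image (s := (Icc 1 N).filter (fun l => ¬ l ≤ k))
      (g := fun l => l - k) (f := fun j : ℕ => G (j:ℤ))
      (fun x hx y hy hxy => by
        simp only [Finset.coe_filter, Finset.mem_coe, Set.mem_setOf_eq, Finset.mem_filter, Finset.mem_Icc, not_le] at hx hy
        have h' : x - k = y - k := hxy; omega)
    rw [← himg]
    refine Finset.sum_le_sum_of_subset_of_nonneg ?_ (fun j _ _ => hnn _)
    intro j hj
    simp only [Finset.mem_image, Finset.mem_filter, Finset.mem_Icc, not_le] at hj ⊢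
    omega
  linarith

lemma final_calc {u α tβ : ℝ} (hu0 : 0 < u) (hu2 : u < 2) (hune : u ≠ 1)
    (hαu : u ≤ α) (hβu : 2 * u ≤ tβ) (hsum : 1 + u < α + tβ) :
    ∃ C : ℝ, 0 < C ∧ ∀ N : ℕ, 1 ≤ N →
      (1 + 2 * ∑ j ∈ Icc 1 N, (j : ℝ) ^ (-α)) * (∑ j ∈ Icc 1 N, (j : ℝ) ^ (-tβ))
        ≤ C * (1 + (N : ℝ) ^ (1 - u)) := by
  rcases lt_or_gt_of_ne hune with hu1 | hu1
  · have huθ : (0:ℝ) ≤ u := le_of_lt hu0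
    by_cases hα1 : 1 < α
    · obtain ⟨K, hK, hKb⟩ := sum_rpow_bounded hα1
      refine ⟨(1 + 2*K) / (1 - u), div_pos (by linarith) (by linarith), fun N hN => ?_⟩
      have h1 : ∑ j ∈ Icc 1 N, (j : ℝ) ^ (-tβ) ≤ (N:ℝ)^(1-u)/(1-u) :=
        le_trans (sum_rpow_mono (by linarith) N) (sum_rpow_le huθ hu1 N)
      have h2 : (1 + 2 * ∑ j ∈ Icc 1 N, (j : ℝ) ^ (-α)) ≤ 1 + 2*K := by
        have := hKb N; linarith
      have hnn : 0 ≤ (N:ℝ)^(1-u)/(1-u) :=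
        div_nonneg (Real.rpow_nonneg (Nat.cast_nonneg N) _) (by linarith)
      calc (1 + 2 * ∑ j ∈ Icc 1 N, (j : ℝ) ^ (-α)) * (∑ j ∈ Icc 1 N, (j : ℝ) ^ (-tβ))
          ≤ (1 + 2*K) * ((N:ℝ)^(1-u)/(1-u)) := by
            have hp : 0 ≤ (1 + 2 * ∑ j ∈ Icc 1 N, (j : ℝ) ^ (-α)) := by
              have := sum_rpow_nonneg α N; linarith
            exact mul_le_mul h2 h1 (sum_rpow_nonneg tβ N) (by linarith)
        _ = (1 + 2*K)/(1-u) * (N:ℝ)^(1-u) := by ring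
        _ ≤ (1 + 2*K)/(1-u) * (1 + (N:ℝ)^(1-u)) := by
            have h3 : (0:ℝ) < (1+2*K)/(1-u) := div_pos (by linarith) (by linarith)
            exact mul_le_mul_of_nonneg_left (by linarith) (le_of_lt h3)
    · push_neg at hα1
      by_cases hβ1 : 1 < tβ
      · obtain ⟨K, hK, hKb⟩ := sum_rpow_bounded hβ1
        have hc1 : (0:ℝ) < 2*K/(1-u) := div_pos (by linarith) (by linarith)
        refine ⟨K + 2*K/(1-u), by linarith, fun N hN => ?_⟩
        have h1 : ∑ j ∈ Icc 1 N, (j : ℝ) ^ (-α) ≤ (N:ℝ)^(1-u)/(1-u) :=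
          le_trans (sum_rpow_mono hαu N) (sum_rpow_le huθ hu1 N)
        have hTβ0 := sum_rpow_nonneg tβ N
        have hTα0 := sum_rpow_nonneg α N
        have hKN := hKb N
        have hNu : 0 ≤ (N:ℝ)^(1-u) := Real.rpow_nonneg (Nat.cast_nonneg N) _
        calc (1 + 2 * ∑ j ∈ Icc 1 N, (j : ℝ) ^ (-α)) * (∑ j ∈ Icc 1 N, (j : ℝ) ^ (-tβ))
            ≤ (1 + 2 * ((N:ℝ)^(1-u)/(1-u))) * K := by
              apply mul_le_mul (by linarith) hKN hTβ0
              have : 0 ≤ (N:ℝ)^(1-u)/(1-u) := div_nonneg hNu (by linarith)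
              linarith
          _ = K + (2*K/(1-u)) * (N:ℝ)^(1-u) := by field_simp
          _ ≤ (K + 2*K/(1-u)) * (1 + (N:ℝ)^(1-u)) := by nlinarith [hc1, hNu, hK]
      · push_neg at hβ1
        set ε := min ((α + tβ - 1 - u)/2) u with hε
        have hε0 : 0 < ε := by
          apply lt_min (by linarith) hu0
        have hεu : ε ≤ u := min_le_right _ _
        have hεs : 2*ε ≤ α + tβ - 1 - u := by
          have := min_le_left ((α + tβ - 1 - u)/2) u
          rw [← hε] at this; linarith
        set θa := α - ε with hθa
        set θb := tβ - ε with hθb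
        have hθa0 : 0 ≤ θa := by simp only [hθa]; linarith
        have hθa1 : θa < 1 := by simp only [hθa]; linarith
        have hθb0 : u ≤ θb := by simp only [hθb]; linarith
        have hθb1 : θb < 1 := by simp only [hθb]; linarith
        have hda : (0:ℝ) < 1 - θa := by linarith
        have hdb : (0:ℝ) < 1 - θb := by linarith
        have hcc2 : (0:ℝ) < 1/(1-θb) := div_pos one_pos hdb
        have hcc1 : (0:ℝ) < 2/((1-θa)*(1-θb)) := div_pos two_pos (mul_pos hda hdb)
        refine ⟨1/(1-θb) + 2/((1-θa)*(1-θb)), by linarith, fun N hN => ?_⟩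
        have hN1 : (1:ℝ) ≤ (N:ℝ) := by exact_mod_cast hN
        have h1 : ∑ j ∈ Icc 1 N, (j : ℝ) ^ (-α) ≤ (N:ℝ)^(1-θa)/(1-θa) :=
          le_trans (sum_rpow_mono (by simp [hθa]; linarith) N) (sum_rpow_le hθa0 hθa1 N)
        have h2 : ∑ j ∈ Icc 1 N, (j : ℝ) ^ (-tβ) ≤ (N:ℝ)^(1-θb)/(1-θb) :=
          le_trans (sum_rpow_mono (by simp [hθb]; linarith) N) (sum_rpow_le (by linarith) hθb1 N)
        have hb1 : (N:ℝ)^(1-θb) ≤ (N:ℝ)^(1-u) :=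
          Real.rpow_le_rpow_of_exponent_le hN1 (by linarith)
        have hab : (N:ℝ)^(1-θa) * (N:ℝ)^(1-θb) ≤ (N:ℝ)^(1-u) := by
          rw [← Real.rpow_add (by linarith : (0:ℝ) < (N:ℝ))]
          exact Real.rpow_le_rpow_of_exponent_le hN1 (by linarith)
        have hTβ0 := sum_rpow_nonneg tβ N
        have hTα0 := sum_rpow_nonneg α N
        have hNa : (0:ℝ) ≤ (N:ℝ)^(1-θa) := Real.rpow_nonneg (by linarith) _
        have hNb : (0:ℝ) ≤ (N:ℝ)^(1-θb) := Real.rpow_nonneg (by linarith) _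
        have hNu : (0:ℝ) ≤ (N:ℝ)^(1-u) := Real.rpow_nonneg (by linarith) _
        calc (1 + 2 * ∑ j ∈ Icc 1 N, (j : ℝ) ^ (-α)) * (∑ j ∈ Icc 1 N, (j : ℝ) ^ (-tβ))
            ≤ (1 + 2 * ((N:ℝ)^(1-θa)/(1-θa))) * ((N:ℝ)^(1-θb)/(1-θb)) := by
              apply mul_le_mul (by linarith) h2 hTβ0
              have : 0 ≤ (N:ℝ)^(1-θa)/(1-θa) := div_nonneg hNa (by linarith)
              linarith
          _ = (N:ℝ)^(1-θb)/(1-θb) + (2/((1-θa)*(1-θb))) * ((N:ℝ)^(1-θa) * (N:ℝ)^(1-θb)) := by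
              field_simp
          _ ≤ (N:ℝ)^(1-u)/(1-θb) + (2/((1-θa)*(1-θb))) * (N:ℝ)^(1-u) := by
              have s1 : (N:ℝ)^(1-θb)/(1-θb) ≤ (N:ℝ)^(1-u)/(1-θb) :=
                div_le_div_of_nonneg_right hb1 hdb.le
              have s2 := mul_le_mul_of_nonneg_left hab (le_of_lt hcc1)
              linarith
          _ ≤ (1/(1-θb) + 2/((1-θa)*(1-θb))) * (1 + (N:ℝ)^(1-u)) := by
              have e : (N:ℝ)^(1-u)/(1-θb) = (1/(1-θb)) * (N:ℝ)^(1-u) := by ring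
              have expand : (1/(1-θb) + 2/((1-θa)*(1-θb))) * (1 + (N:ℝ)^(1-u))
                  = (1/(1-θb) + 2/((1-θa)*(1-θb))) + (1/(1-θb)) * (N:ℝ)^(1-u)
                    + (2/((1-θa)*(1-θb))) * (N:ℝ)^(1-u) := by ring
              rw [e, expand]
              have := mul_nonneg (le_of_lt hcc1) hNu
              linarith
  · obtain ⟨K1, hK1, hK1b⟩ := sum_rpow_bounded (by linarith : (1:ℝ) < α)
    obtain ⟨K2, hK2, hK2b⟩ := sum_rpow_bounded (by linarith : (1:ℝ) < tβ)
    refine ⟨(1 + 2*K1) * K2, mul_pos (by linarith) hK2, fun N hN => ?_⟩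
    have h1 := hK1b N
    have h2 := hK2b N
    have hTβ0 := sum_rpow_nonneg tβ N
    have hTα0 := sum_rpow_nonneg α N
    have hNu : (0:ℝ) ≤ (N:ℝ)^(1-u) := Real.rpow_nonneg (Nat.cast_nonneg N) _
    calc (1 + 2 * ∑ j ∈ Icc 1 N, (j : ℝ) ^ (-α)) * (∑ j ∈ Icc 1 N, (j : ℝ) ^ (-tβ))
        ≤ (1 + 2*K1) * K2 := mul_le_mul (by linarith) h2 hTβ0 (by linarith)
      _ ≤ (1 + 2*K1) * K2 * (1 + (N:ℝ)^(1-u)) :=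
          le_mul_of_one_le_right (mul_nonneg (by linarith) (by linarith)) (by linarith)

end Aux

set_option maxHeartbeats 2000000 in
/-- For `p ≥ 2`, `H ∈ (0, 1 − 1/(2p))` and `r ∈ {0,1,…,p−1}`, there is a
constant `C > 0` such that for every `N ≥ 1`,
`(1/N) Σ_{k,l=1}^{N} |ρ_H(k−l)|^r |ρ_H(k−1)|^{p−r} |ρ_H(l−1)|^{p−r} ≤ C (N^{−1} + N^{2H−2})`. -/
theorem stmt18 (p : ℕ) (hp : 2 ≤ p) (H : ℝ)
    (hH : H ∈ Set.Ioo (0 : ℝ) (1 - 1 / (2 * (p : ℝ))))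
    (r : ℕ) (hr : r ≤ p - 1) :
    ∃ C : ℝ, 0 < C ∧ ∀ N : ℕ, 1 ≤ N →
      (1 / (N : ℝ)) *
        ∑ k ∈ Finset.Icc 1 N, ∑ l ∈ Finset.Icc 1 N,
          |rhoFGN H ((k : ℤ) - (l : ℤ))| ^ r *
          |rhoFGN H ((k : ℤ) - 1)| ^ (p - r) *
          |rhoFGN H ((l : ℤ) - 1)| ^ (p - r)
      ≤ C * ((N : ℝ) ^ (-1 : ℝ) + (N : ℝ) ^ (2 * H - 2)) := by
  obtain ⟨hH0, hHp⟩ := hH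
  have hpR : (2:ℝ) ≤ (p:ℝ) := by exact_mod_cast hp
  have hH1 : H < 1 := by
    have : (0:ℝ) < 1/(2*(p:ℝ)) := by positivity
    linarith
  have hpu : 1 < (p:ℝ) * (2 - 2*H) := by
    have h2p : (0:ℝ) < 2*(p:ℝ) := by linarith
    have h' : 1/(2*(p:ℝ)) < 1 - H := by linarith
    have h'' := (div_lt_iff₀ h2p).mp h'
    nlinarith
  have hrp : r < p := by omega
  have hpr1 : 1 ≤ p - r := by omega
  by_cases hhalf : H = 1/2
  · -- H = 1/2 : the covariance vanishes off 0
    subst hhalf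
    refine ⟨1, one_pos, fun N hN => ?_⟩
    have hN0 : (0:ℝ) < (N:ℝ) := by exact_mod_cast Nat.lt_of_lt_of_le Nat.zero_lt_one hN
    have hS : (∑ k ∈ Finset.Icc 1 N, ∑ l ∈ Finset.Icc 1 N,
        |rhoFGN (1/2) ((k : ℤ) - (l : ℤ))| ^ r *
        |rhoFGN (1/2) ((k : ℤ) - 1)| ^ (p - r) *
        |rhoFGN (1/2) ((l : ℤ) - 1)| ^ (p - r)) = 1 := by
      rw [Finset.sum_eq_single_of_mem 1 (Finset.mem_Icc.mpr ⟨le_refl 1, hN⟩)]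
      · rw [Finset.sum_eq_single_of_mem 1 (Finset.mem_Icc.mpr ⟨le_refl 1, hN⟩)]
        · norm_num [rho_zero (1/2) (by norm_num)]
        · intro l hl hlne
          have hz : rhoFGN (1/2) ((l:ℤ) - 1) = 0 := by
            apply rho_half
            simp only [Finset.mem_Icc] at hl
            omega
          rw [hz]
          simp [zero_pow (by omega : p - r ≠ 0)]
      · intro k hk hkne
        apply Finset.sum_eq_zero; intro l hl
        have hz : rhoFGN (1/2) ((k:ℤ) - 1) = 0 := by
          apply rho_half
          simp only [Finset.mem_Icc] at hk
          omega
        rw [hz]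
        simp [zero_pow (by omega : p - r ≠ 0)]
    rw [hS, mul_one]
    have i1 : (N:ℝ)^(-1:ℝ) = 1/(N:ℝ) := by
      rw [show (-1:ℝ) = -(1:ℝ) from by norm_num, Real.rpow_neg hN0.le, Real.rpow_one, one_div]
    have hnn2 : (0:ℝ) ≤ (N:ℝ)^(2*(1/2:ℝ)-2) := Real.rpow_nonneg hN0.le _
    rw [one_mul, i1]
    linarith
  · obtain ⟨c, hc1, hcb⟩ := rho_bound hH0 hH1
    have hcb4 : ∀ k : ℕ, 1 ≤ k → |rhoFGN H ((k:ℤ) - 1)| ≤ 4*c*(k:ℝ)^(2*H-2) :=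
      fun k hk => rho_bound_nat hH0 hH1 hc1 hcb k hk
    by_cases hr0 : r = 0
    · -- r = 0
      subst hr0
      obtain ⟨K, hK, hKb⟩ := sum_rpow_bounded (γ := (p:ℝ)*(2-2*H)) hpu
      have h4c : (0:ℝ) < 4*c := by linarith
      refine ⟨((4*c)^p * K)^2 + 1, by positivity, fun N hN => ?_⟩
      have hN0 : (0:ℝ) < (N:ℝ) := by exact_mod_cast Nat.lt_of_lt_of_le Nat.zero_lt_one hN
      set X : ℕ → ℝ := fun k => |rhoFGN H ((k:ℤ) - 1)| ^ (p - 0) with hX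
      have hXb : ∀ k ∈ Finset.Icc 1 N, X k ≤ (4*c)^p * (k:ℝ)^(-((p:ℝ)*(2-2*H))) := by
        intro k hk
        simp only [Finset.mem_Icc] at hk
        have hk1 : (1:ℝ) ≤ (k:ℝ) := by exact_mod_cast hk.1
        have e1 : X k ≤ (4*c*(k:ℝ)^(2*H-2)) ^ (p - 0) := by
          simp only [hX]
          exact pow_le_pow_left₀ (abs_nonneg _) (hcb4 k hk.1) _
        have e2 : (4*c*(k:ℝ)^(2*H-2)) ^ (p - 0) = (4*c)^p * (k:ℝ)^(-((p:ℝ)*(2-2*H))) := by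
          rw [Nat.sub_zero, mul_pow, ← Real.rpow_natCast ((k:ℝ)^(2*H-2)) p,
            ← Real.rpow_mul (by linarith : (0:ℝ) ≤ (k:ℝ)),
            show (2*H-2) * ((p:ℕ):ℝ) = -((p:ℝ)*(2-2*H)) from by push_cast; ring]
        rw [← e2]; exact e1
      have hsum1 : ∑ k ∈ Finset.Icc 1 N, X k ≤ (4*c)^p * K := by
        calc ∑ k ∈ Finset.Icc 1 N, X k
            ≤ ∑ k ∈ Finset.Icc 1 N, (4*c)^p * (k:ℝ)^(-((p:ℝ)*(2-2*H))) :=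
              Finset.sum_le_sum hXb
          _ = (4*c)^p * ∑ k ∈ Finset.Icc 1 N, (k:ℝ)^(-((p:ℝ)*(2-2*H))) := by
              rw [Finset.mul_sum]
          _ ≤ (4*c)^p * K := by
              have := hKb N
              have : (0:ℝ) < (4*c)^p := pow_pos h4c p
              nlinarith [hKb N, pow_pos h4c p]
      have hXnn : 0 ≤ ∑ k ∈ Finset.Icc 1 N, X k :=
        Finset.sum_nonneg (fun k _ => pow_nonneg (abs_nonneg _) _)
      have hSb : (∑ k ∈ Finset.Icc 1 N, ∑ l ∈ Finset.Icc 1 N,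
          |rhoFGN H ((k : ℤ) - (l : ℤ))| ^ 0 *
          |rhoFGN H ((k : ℤ) - 1)| ^ (p - 0) *
          |rhoFGN H ((l : ℤ) - 1)| ^ (p - 0)) ≤ ((4*c)^p * K)^2 := by
        have hprod : (∑ k ∈ Finset.Icc 1 N, ∑ l ∈ Finset.Icc 1 N,
            |rhoFGN H ((k : ℤ) - (l : ℤ))| ^ 0 *
            |rhoFGN H ((k : ℤ) - 1)| ^ (p - 0) *
            |rhoFGN H ((l : ℤ) - 1)| ^ (p - 0))
            = (∑ k ∈ Finset.Icc 1 N, X k) * (∑ l ∈ Finset.Icc 1 N, X l) := by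
          rw [Finset.sum_mul_sum]
          refine Finset.sum_congr rfl (fun k _ => Finset.sum_congr rfl (fun l _ => ?_))
          simp only [hX, pow_zero, one_mul]
        rw [hprod, ← sq]
        have := pow_le_pow_left₀ hXnn hsum1 2
        simpa using this
      have i1 : (N:ℝ)^(-1:ℝ) = 1/(N:ℝ) := by
        rw [show (-1:ℝ) = -(1:ℝ) from by norm_num, Real.rpow_neg hN0.le, Real.rpow_one, one_div]
      have hnn2 : (0:ℝ) ≤ (N:ℝ)^(2*H-2) := Real.rpow_nonneg hN0.le _
      have hC0 : (0:ℝ) ≤ ((4*c)^p * K)^2 := sq_nonneg _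
      calc (1 / (N : ℝ)) * (∑ k ∈ Finset.Icc 1 N, ∑ l ∈ Finset.Icc 1 N,
            |rhoFGN H ((k : ℤ) - (l : ℤ))| ^ 0 *
            |rhoFGN H ((k : ℤ) - 1)| ^ (p - 0) *
            |rhoFGN H ((l : ℤ) - 1)| ^ (p - 0))
          ≤ (1 / (N : ℝ)) * ((4*c)^p * K)^2 := by
            apply mul_le_mul_of_nonneg_left hSb (by positivity)
        _ = ((4*c)^p * K)^2 * (1/(N:ℝ)) := by ring
        _ ≤ (((4*c)^p * K)^2 + 1) * ((N:ℝ)^(-1:ℝ) + (N:ℝ)^(2*H-2)) := by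
            rw [i1]
            have h1N : (0:ℝ) ≤ 1/(N:ℝ) := by positivity
            nlinarith
    · -- main case : 1 ≤ r, H ≠ 1/2
      have hr1 : 1 ≤ r := by omega
      have hrR : (1:ℝ) ≤ (r:ℝ) := by exact_mod_cast hr1
      have hprR : (1:ℝ) ≤ ((p - r : ℕ):ℝ) := by exact_mod_cast hpr1
      have hcast : ((p - r : ℕ):ℝ) = (p:ℝ) - (r:ℝ) := by
        push_cast [Nat.cast_sub hrp.le]; ring
      set u : ℝ := 2 - 2*H with hu
      set αe : ℝ := (r:ℝ) * u with hαe
      set tβ : ℝ := 2 * ((p - r : ℕ):ℝ) * u with htβ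
      have hu0 : (0:ℝ) < u := by rw [hu]; linarith
      have hu2 : u < 2 := by rw [hu]; linarith
      have hune : u ≠ 1 := by
        intro h; apply hhalf; rw [hu] at h; linarith
      have hαu : u ≤ αe := by
        rw [hαe]; nlinarith
      have hβu : 2*u ≤ tβ := by
        rw [htβ]; nlinarith
      have hrpR : (r:ℝ) ≤ (p:ℝ) - 1 := by
        have : (r:ℝ) + 1 ≤ (p:ℝ) := by exact_mod_cast (by omega : r + 1 ≤ p)
        linarith
      have hpuu : 1 < (p:ℝ) * u := by rw [hu]; exact hpu
      have hsum : 1 + u < αe + tβ := by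
        rw [hαe, htβ, hcast]
        nlinarith
      obtain ⟨C, hC, hCb⟩ := final_calc hu0 hu2 hune hαu hβu hsum
      set G : ℤ → ℝ := fun v => (c * (max 1 |(v:ℝ)|) ^ (2*H-2)) ^ r with hG
      have hmaxnn : ∀ v : ℤ, (0:ℝ) ≤ max 1 |(v:ℝ)| := fun v => le_trans zero_le_one (le_max_left _ _)
      have hGnn : ∀ v, 0 ≤ G v := fun v =>
        pow_nonneg (mul_nonneg (by linarith) (Real.rpow_nonneg (hmaxnn v) _)) r
      have hGeven : ∀ v, G (-v) = G v := by
        intro v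
        simp only [hG]
        have : |((-v : ℤ):ℝ)| = |(v:ℝ)| := by push_cast; rw [abs_neg]
        rw [this]
      have hG0 : G 0 = c ^ r := by
        simp only [hG]
        norm_num
      have hGj : ∀ j : ℕ, 1 ≤ j → G (j:ℤ) = c^r * (j:ℝ)^(-αe) := by
        intro j hj
        have hj1 : (1:ℝ) ≤ (j:ℝ) := by exact_mod_cast hj
        simp only [hG]
        rw [show |((j:ℤ):ℝ)| = (j:ℝ) from by push_cast; exact abs_of_nonneg (by linarith),
          max_eq_right hj1, mul_pow, ← Real.rpow_natCast ((j:ℝ)^(2*H-2)) r,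
          ← Real.rpow_mul (by linarith : (0:ℝ) ≤ (j:ℝ)),
          show (2*H-2) * ((r:ℕ):ℝ) = -αe from by rw [hαe, hu]; push_cast; ring]
      set bf : ℕ → ℝ := fun k => (4*c*(k:ℝ)^(2*H-2)) ^ (p - r) with hbf
      have hbfnn : ∀ k, 0 ≤ bf k := fun k =>
        pow_nonneg (mul_nonneg (by linarith) (Real.rpow_nonneg (Nat.cast_nonneg k) _)) _
      set cB : ℝ := (4*c) ^ ((p-r) * 2) with hcB
      have hcB0 : (0:ℝ) < cB := pow_pos (by linarith) _
      have hbsq : ∀ k : ℕ, 1 ≤ k → (bf k)^2 = cB * (k:ℝ)^(-tβ) := by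
        intro k hk
        have hk1 : (1:ℝ) ≤ (k:ℝ) := by exact_mod_cast hk
        simp only [hbf, hcB]
        rw [← pow_mul, mul_pow, ← Real.rpow_natCast ((k:ℝ)^(2*H-2)) ((p-r)*2),
          ← Real.rpow_mul (by linarith : (0:ℝ) ≤ (k:ℝ)),
          show (2*H-2) * (((p-r)*2 : ℕ):ℝ) = -tβ from by rw [htβ, hu]; push_cast; ring]
      -- final constant
      have hcr : (0:ℝ) < c ^ r := pow_pos (by linarith) r
      refine ⟨c^r * cB * C, mul_pos (mul_pos hcr hcB0) hC, fun N hN => ?_⟩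
      have hN1R : (1:ℝ) ≤ (N:ℝ) := Nat.one_le_cast.mpr hN
      have hN0 : (0:ℝ) < (N:ℝ) := lt_of_lt_of_le one_pos hN1R
      -- pointwise bound
      have hpt : ∀ k ∈ Finset.Icc 1 N, ∀ l ∈ Finset.Icc 1 N,
          |rhoFGN H ((k : ℤ) - (l : ℤ))| ^ r *
          |rhoFGN H ((k : ℤ) - 1)| ^ (p - r) *
          |rhoFGN H ((l : ℤ) - 1)| ^ (p - r)
          ≤ G ((k:ℤ) - (l:ℤ)) * (((bf k)^2 + (bf l)^2)/2) := by
        intro k hk l hl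
        simp only [Finset.mem_Icc] at hk hl
        have e1 : |rhoFGN H ((k : ℤ) - (l : ℤ))| ^ r ≤ G ((k:ℤ) - (l:ℤ)) :=
          pow_le_pow_left₀ (abs_nonneg _) (hcb _) r
        have e2 : |rhoFGN H ((k : ℤ) - 1)| ^ (p - r) ≤ bf k :=
          pow_le_pow_left₀ (abs_nonneg _) (hcb4 k hk.1) _
        have e3 : |rhoFGN H ((l : ℤ) - 1)| ^ (p - r) ≤ bf l :=
          pow_le_pow_left₀ (abs_nonneg _) (hcb4 l hl.1) _
        have hmm : |rhoFGN H ((k : ℤ) - 1)| ^ (p - r) * |rhoFGN H ((l : ℤ) - 1)| ^ (p - r)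
            ≤ bf k * bf l :=
          mul_le_mul e2 e3 (pow_nonneg (abs_nonneg _) _) (hbfnn k)
        have hamgm : bf k * bf l ≤ ((bf k)^2 + (bf l)^2)/2 := by
          nlinarith [two_mul_le_add_sq (bf k) (bf l)]
        calc |rhoFGN H ((k : ℤ) - (l : ℤ))| ^ r *
            |rhoFGN H ((k : ℤ) - 1)| ^ (p - r) * |rhoFGN H ((l : ℤ) - 1)| ^ (p - r)
            = |rhoFGN H ((k : ℤ) - (l : ℤ))| ^ r *
              (|rhoFGN H ((k : ℤ) - 1)| ^ (p - r) * |rhoFGN H ((l : ℤ) - 1)| ^ (p - r)) := by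
              ring
          _ ≤ G ((k:ℤ) - (l:ℤ)) * (bf k * bf l) :=
              mul_le_mul e1 hmm
                (mul_nonneg (pow_nonneg (abs_nonneg _) _) (pow_nonneg (abs_nonneg _) _))
                (hGnn _)
          _ ≤ G ((k:ℤ) - (l:ℤ)) * (((bf k)^2 + (bf l)^2)/2) :=
              mul_le_mul_of_nonneg_left hamgm (hGnn _)
      have hswap : ∑ k ∈ Finset.Icc 1 N, ∑ l ∈ Finset.Icc 1 N, G ((k:ℤ) - (l:ℤ)) * (bf l)^2
          = ∑ k ∈ Finset.Icc 1 N, ∑ l ∈ Finset.Icc 1 N, G ((k:ℤ) - (l:ℤ)) * (bf k)^2 := by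
        rw [Finset.sum_comm]
        refine Finset.sum_congr rfl (fun k _ => Finset.sum_congr rfl (fun l _ => ?_))
        rw [show (l:ℤ) - (k:ℤ) = -((k:ℤ) - (l:ℤ)) from by ring, hGeven]
      set Tα : ℝ := ∑ j ∈ Finset.Icc 1 N, (j:ℝ)^(-αe) with hTα
      set Tβ : ℝ := ∑ j ∈ Finset.Icc 1 N, (j:ℝ)^(-tβ) with hTβ
      have hGsum : ∑ j ∈ Finset.Icc 1 N, G ((j:ℕ):ℤ) = c^r * Tα := by
        rw [hTα, Finset.mul_sum]
        refine Finset.sum_congr rfl (fun j hj => ?_)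
        exact hGj j (Finset.mem_Icc.mp hj).1
      have hbsum : ∑ k ∈ Finset.Icc 1 N, (bf k)^2 = cB * Tβ := by
        rw [hTβ, Finset.mul_sum]
        refine Finset.sum_congr rfl (fun j hj => ?_)
        exact hbsq j (Finset.mem_Icc.mp hj).1
      have hchain : (∑ k ∈ Finset.Icc 1 N, ∑ l ∈ Finset.Icc 1 N,
          |rhoFGN H ((k : ℤ) - (l : ℤ))| ^ r *
          |rhoFGN H ((k : ℤ) - 1)| ^ (p - r) *
          |rhoFGN H ((l : ℤ) - 1)| ^ (p - r))
          ≤ (c^r * cB) * ((1 + 2*Tα) * Tβ) := by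
        calc (∑ k ∈ Finset.Icc 1 N, ∑ l ∈ Finset.Icc 1 N,
            |rhoFGN H ((k : ℤ) - (l : ℤ))| ^ r *
            |rhoFGN H ((k : ℤ) - 1)| ^ (p - r) *
            |rhoFGN H ((l : ℤ) - 1)| ^ (p - r))
            ≤ ∑ k ∈ Finset.Icc 1 N, ∑ l ∈ Finset.Icc 1 N,
                G ((k:ℤ) - (l:ℤ)) * (((bf k)^2 + (bf l)^2)/2) :=
              Finset.sum_le_sum (fun k hk => Finset.sum_le_sum (fun l hl => hpt k hk l hl))
          _ = (∑ k ∈ Finset.Icc 1 N, ∑ l ∈ Finset.Icc 1 N, G ((k:ℤ) - (l:ℤ)) * (bf k)^2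
              + ∑ k ∈ Finset.Icc 1 N, ∑ l ∈ Finset.Icc 1 N, G ((k:ℤ) - (l:ℤ)) * (bf l)^2)/2 := by
              rw [← Finset.sum_add_distrib, Finset.sum_div]
              refine Finset.sum_congr rfl (fun k _ => ?_)
              rw [← Finset.sum_add_distrib, Finset.sum_div]
              refine Finset.sum_congr rfl (fun l _ => ?_)
              ring
          _ = ∑ k ∈ Finset.Icc 1 N, ∑ l ∈ Finset.Icc 1 N, G ((k:ℤ) - (l:ℤ)) * (bf k)^2 := by
              rw [hswap]; ring
          _ = ∑ k ∈ Finset.Icc 1 N, (bf k)^2 * (∑ l ∈ Finset.Icc 1 N, G ((k:ℤ) - (l:ℤ))) := by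
              refine Finset.sum_congr rfl (fun k _ => ?_)
              rw [Finset.mul_sum]
              exact Finset.sum_congr rfl (fun l _ => by ring)
          _ ≤ ∑ k ∈ Finset.Icc 1 N, (bf k)^2 * (G 0 + 2 * ∑ j ∈ Finset.Icc 1 N, G ((j:ℕ):ℤ)) :=
              Finset.sum_le_sum (fun k hk =>
                mul_le_mul_of_nonneg_left (window_sum G hGnn hGeven N k hk) (sq_nonneg _))
          _ = (G 0 + 2 * ∑ j ∈ Finset.Icc 1 N, G ((j:ℕ):ℤ)) * (∑ k ∈ Finset.Icc 1 N, (bf k)^2) := by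
              rw [← Finset.sum_mul]; ring
          _ = (c^r * cB) * ((1 + 2*Tα) * Tβ) := by
              rw [hG0, hGsum, hbsum]; ring
      have hfc := hCb N hN
      have hNu : (0:ℝ) ≤ (N:ℝ)^(1-u) := Real.rpow_nonneg hN0.le _
      have hstep : (∑ k ∈ Finset.Icc 1 N, ∑ l ∈ Finset.Icc 1 N,
          |rhoFGN H ((k : ℤ) - (l : ℤ))| ^ r *
          |rhoFGN H ((k : ℤ) - 1)| ^ (p - r) *
          |rhoFGN H ((l : ℤ) - 1)| ^ (p - r))
          ≤ (c^r * cB) * (C * (1 + (N:ℝ)^(1-u))) := by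
        calc (∑ k ∈ Finset.Icc 1 N, ∑ l ∈ Finset.Icc 1 N,
            |rhoFGN H ((k : ℤ) - (l : ℤ))| ^ r *
            |rhoFGN H ((k : ℤ) - 1)| ^ (p - r) *
            |rhoFGN H ((l : ℤ) - 1)| ^ (p - r))
            ≤ (c^r * cB) * ((1 + 2*Tα) * Tβ) := hchain
          _ ≤ (c^r * cB) * (C * (1 + (N:ℝ)^(1-u))) :=
              mul_le_mul_of_nonneg_left hfc (by positivity)
      have i2 : (N:ℝ)^(2*H-2) = (N:ℝ)^(1-u) * (1/(N:ℝ)) := by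
        rw [show 2*H-2 = (1-u) - 1 from by rw [hu]; ring, Real.rpow_sub hN0, Real.rpow_one]
        ring
      have i1 : (N:ℝ)^(-1:ℝ) = 1/(N:ℝ) := by
        rw [show (-1:ℝ) = -(1:ℝ) from by norm_num, Real.rpow_neg hN0.le, Real.rpow_one, one_div]
      calc (1 / (N : ℝ)) * (∑ k ∈ Finset.Icc 1 N, ∑ l ∈ Finset.Icc 1 N,
            |rhoFGN H ((k : ℤ) - (l : ℤ))| ^ r *
            |rhoFGN H ((k : ℤ) - 1)| ^ (p - r) *
            |rhoFGN H ((l : ℤ) - 1)| ^ (p - r))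
          ≤ (1 / (N : ℝ)) * ((c^r * cB) * (C * (1 + (N:ℝ)^(1-u)))) :=
            mul_le_mul_of_nonneg_left hstep (by positivity)
        _ = (c^r * cB * C) * (1/(N:ℝ) + (N:ℝ)^(1-u) * (1/(N:ℝ))) := by ring
        _ = (c^r * cB * C) * ((N:ℝ)^(-1:ℝ) + (N:ℝ)^(2*H-2)) := by rw [i1, i2]
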